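/- Let g be the 5×5 symmetric matrix with block form [[0, 0, −1], [0, I₃, 0], [−1, 0, 0]] (rows and columns indexed 0,…,4), and let möb = {X ∈ Matrix (Fin 5) (Fin 5) ℝ : Xᵀ g + g X = 0} be the Lie algebra of the Möbius group, with bracket the matrix commutator. For each fixed C ∈ ℝ, let 𝔥_C ⊂ möb be the set of X ∈ möb whose entries X^a_b (a = row, b = column, indices 0,…,4) satisfy: X⁰₀ = 0, X⁰₁ = (−1/2 + C)·X¹₀, X⁰₂ = (−1/2 − C)·X²₀, X⁰₃ = 0, X²₁ = 0, X³₁ = X¹₀, X³₂ = −X²₀, and X³₀ = 0. Then 𝔥_C is a 2-dimensional Lie subalgebra of möb. -/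

import Mathlib

set_option maxHeartbeats 1000000

/-- The Gram matrix `g = [[0,0,-1],[0,I₃,0],[-1,0,0]]` of the Lorentz form in a
Möbius frame. -/
def mobG : Matrix (Fin 5) (Fin 5) ℝ :=
  !![0, 0, 0, 0, -1;
     0, 1, 0, 0, 0;
     0, 0, 1, 0, 0;
     0, 0, 0, 1, 0;
     -1, 0, 0, 0, 0]

/-- Membership in the Möbius Lie algebra `möb = {X : Xᵀ g + g X = 0}`. -/
def memMob (X : Matrix (Fin 5) (Fin 5) ℝ) : Prop :=
  X.transpose * mobG + mobG * X = 0

/-- For fixed `C ∈ ℝ`, membership in the subset `𝔥_C ⊂ möb` cut out by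
`X⁰₀ = 0`, `X⁰₁ = (-1/2 + C) X¹₀`, `X⁰₂ = (-1/2 - C) X²₀`, `X⁰₃ = 0`, `X²₁ = 0`,
`X³₁ = X¹₀`, `X³₂ = -X²₀`, `X³₀ = 0`. -/
def memHC (C : ℝ) (X : Matrix (Fin 5) (Fin 5) ℝ) : Prop :=
  memMob X ∧ X 0 0 = 0 ∧ X 0 1 = (-(1 / 2) + C) * X 1 0 ∧
    X 0 2 = (-(1 / 2) - C) * X 2 0 ∧ X 0 3 = 0 ∧ X 2 1 = 0 ∧
    X 3 1 = X 1 0 ∧ X 3 2 = -(X 2 0) ∧ X 3 0 = 0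

/-- First basis vector of `𝔥_C`. -/
noncomputable def dupA (C : ℝ) : Matrix (Fin 5) (Fin 5) ℝ :=
  !![0, -(1/2)+C, 0, 0, 0;
     1, 0, 0, -1, -(1/2)+C;
     0, 0, 0, 0, 0;
     0, 1, 0, 0, 0;
     0, 1, 0, 0, 0]

/-- Second basis vector of `𝔥_C`. -/
noncomputable def dupB (C : ℝ) : Matrix (Fin 5) (Fin 5) ℝ :=
  !![0, 0, -(1/2)-C, 0, 0;
     0, 0, 0, 0, 0;
     1, 0, 0, 1, -(1/2)-C;
     0, 0, -1, 0, 0;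
     0, 0, 1, 0, 0]

lemma memMob_combo {X Y : Matrix (Fin 5) (Fin 5) ℝ} (hX : memMob X) (hY : memMob Y)
    (s t : ℝ) : memMob (s • X + t • Y) := by
  unfold memMob at *
  rw [Matrix.transpose_add, Matrix.transpose_smul, Matrix.transpose_smul,
    Matrix.add_mul, Matrix.mul_add, Matrix.smul_mul, Matrix.smul_mul,
    Matrix.mul_smul, Matrix.mul_smul]
  have h : s • (X.transpose * mobG) + t • (Y.transpose * mobG) +
      (s • (mobG * X) + t • (mobG * Y)) =
      s • (X.transpose * mobG + mobG * X) + t • (Y.transpose * mobG + mobG * Y) := by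
    module
  rw [h, hX, hY, smul_zero, smul_zero, add_zero]

lemma memMob_dupA (C : ℝ) : memMob (dupA C) := by
  unfold memMob
  ext i j
  simp only [Matrix.add_apply, Matrix.mul_apply, Matrix.transpose_apply,
    Fin.sum_univ_five, Matrix.zero_apply]
  fin_cases i <;> fin_cases j <;>
    simp [dupA, mobG, Matrix.vecHead, Matrix.vecTail, Matrix.cons_val] <;> ring

lemma memMob_dupB (C : ℝ) : memMob (dupB C) := by
  unfold memMob
  ext i j
  simp only [Matrix.add_apply, Matrix.mul_apply, Matrix.transpose_apply,
    Fin.sum_univ_five, Matrix.zero_apply]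
  fin_cases i <;> fin_cases j <;>
    simp [dupB, mobG, Matrix.vecHead, Matrix.vecTail, Matrix.cons_val] <;> ring

lemma memHC_combo (C s t : ℝ) : memHC C (s • dupA C + t • dupB C) := by
  refine ⟨memMob_combo (memMob_dupA C) (memMob_dupB C) s t, ?_, ?_, ?_, ?_, ?_, ?_, ?_, ?_⟩ <;>
    simp [dupA, dupB, Matrix.vecHead, Matrix.vecTail] <;> ring

lemma memHC_eq {C : ℝ} {X : Matrix (Fin 5) (Fin 5) ℝ} (h : memHC C X) :
    X = X 1 0 • dupA C + X 2 0 • dupB C := by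
  obtain ⟨hm, h1, h2, h3, h4, h5, h6, h7, h8⟩ := h
  have key : ∀ i j, (X.transpose * mobG + mobG * X) i j = (0 : ℝ) := by
    intro i j; rw [hm]; rfl
  have e00 := key 0 0
  have e01 := key 0 1
  have e02 := key 0 2
  have e03 := key 0 3
  have e04 := key 0 4
  have e11 := key 1 1
  have e14 := key 1 4
  have e21 := key 2 1
  have e22 := key 2 2
  have e24 := key 2 4
  have e31 := key 3 1
  have e32 := key 3 2
  have e33 := key 3 3
  have e34 := key 3 4
  have e44 := key 4 4
  simp only [mobG, Matrix.mul_apply, Fin.sum_univ_five, Matrix.add_apply,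
    Matrix.transpose_apply] at e00 e01 e02 e03 e04 e11 e14 e21 e22 e24 e31 e32 e33 e34 e44
  simp [Matrix.vecHead, Matrix.vecTail, Matrix.cons_val] at e00 e01 e02 e03 e04 e11 e14 e21 e22 e24 e31 e32 e33 e34 e44
  ext i j
  fin_cases i <;> fin_cases j <;>
    simp [dupA, dupB, Matrix.vecHead, Matrix.vecTail, Matrix.cons_val] <;> linarith

lemma dup_mul (C : ℝ) : dupA C * dupB C = 0 ∧ dupB C * dupA C = 0 := by
  refine ⟨?_, ?_⟩ <;>
  · ext i j
    simp only [Matrix.mul_apply, Fin.sum_univ_five, Matrix.zero_apply]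
    fin_cases i <;> fin_cases j <;>
      simp [dupA, dupB, Matrix.vecHead, Matrix.vecTail, Matrix.cons_val] <;> ring

/-- **The Dupin subalgebras `𝔥_C` of `möb`.**
For each `C ∈ ℝ`, the set `𝔥_C` is a 2-dimensional Lie subalgebra of the Möbius
Lie algebra `möb`. -/
theorem mobius_dupin_subalgebra (C : ℝ) :
    ∃ H : Submodule ℝ (Matrix (Fin 5) (Fin 5) ℝ),
      (∀ X, X ∈ H ↔ memHC C X) ∧
      Module.finrank ℝ H = 2 ∧
      ∀ X ∈ H, ∀ Y ∈ H, X * Y - Y * X ∈ H := by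
  refine ⟨Submodule.span ℝ {dupA C, dupB C}, ?_, ?_, ?_⟩
  · intro X
    rw [Submodule.mem_span_pair]
    constructor
    · rintro ⟨a, b, rfl⟩; exact memHC_combo C a b
    · intro h; exact ⟨X 1 0, X 2 0, (memHC_eq h).symm⟩
  · have hr : ({dupA C, dupB C} : Set (Matrix (Fin 5) (Fin 5) ℝ)) =
        Set.range ![dupA C, dupB C] := by
      ext x; simp [Fin.exists_fin_two, eq_comm, or_comm]
    rw [hr, finrank_span_eq_card]
    · simp
    · rw [LinearIndependent.pair_iff]
      intro s t hst
      have h1 := congrFun (congrFun hst 1) 0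
      have h2 := congrFun (congrFun hst 2) 0
      simp [dupA, dupB, Matrix.vecHead, Matrix.vecTail] at h1 h2
      exact ⟨h1, h2⟩
  · intro X hX Y hY
    rw [Submodule.mem_span_pair] at hX hY
    obtain ⟨a, b, rfl⟩ := hX
    obtain ⟨c, d, rfl⟩ := hY
    obtain ⟨hAB, hBA⟩ := dup_mul C
    have h0 : (a • dupA C + b • dupB C) * (c • dupA C + d • dupB C) -
        (c • dupA C + d • dupB C) * (a • dupA C + b • dupB C) = 0 := by
      simp only [Matrix.add_mul, Matrix.mul_add, Matrix.smul_mul, Matrix.mul_smul,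
        hAB, hBA, smul_zero, smul_smul, add_zero, zero_add]
      module
    rw [h0]
    exact Submodule.zero_mem _
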